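/- For every natural number m ≥ 4, the dominated edge chromatic number of the cycle C_m on m vertices equals m/2 if m ≡ 0 (mod 4), and equals ⌊m/2⌋ + 1 otherwise. -/

import Mathlib

open SimpleGraph

/-- Two edges of a simple graph are adjacent if they are distinct and share an endpoint. -/
def EdgeAdj {V : Type*} (G : SimpleGraph V) (e f : G.edgeSet) : Prop :=
  e ≠ f ∧ ∃ v, v ∈ (e : Sym2 V) ∧ v ∈ (f : Sym2 V)

/-- A dominated edge coloring of `G` with colors in `Fin n`: a proper edge coloring such that
every color class is dominated by some edge. -/
def IsDomEdgeColoring {V : Type*} (G : SimpleGraph V) {n : ℕ} (c : G.edgeSet → Fin n) : Prop :=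
  (∀ e f, EdgeAdj G e f → c e ≠ c f) ∧
  (∀ i : Fin n, ∃ e : G.edgeSet, ∀ f, c f = i → f = e ∨ EdgeAdj G e f)

/-- The dominated edge chromatic number: the least number of colors in a
dominated edge coloring. -/
noncomputable def domEdgeChrom {V : Type*} (G : SimpleGraph V) : ℕ :=
  sInf {n | ∃ c : G.edgeSet → Fin n, IsDomEdgeColoring G c}

/-- `D` is a total edge dominating set: every edge of `G` is adjacent to an edge of `D`. -/
def IsTotalEdgeDom {V : Type*} (G : SimpleGraph V) (D : Set G.edgeSet) : Prop :=
  ∀ e : G.edgeSet, ∃ f ∈ D, EdgeAdj G e f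

/-- The total edge domination number of `G`. -/
noncomputable def totalEdgeDomNumber {V : Type*} (G : SimpleGraph V) : ℕ :=
  sInf {n | ∃ D : Set G.edgeSet, D.Finite ∧ D.ncard = n ∧ IsTotalEdgeDom G D}

namespace Stmt3Aux

variable {m : ℕ} [NeZero m]

lemma edgeAdj_symm {V : Type*} {G : SimpleGraph V} {e f : G.edgeSet}
    (h : EdgeAdj G e f) : EdgeAdj G f e :=
  ⟨h.1.symm, h.2.imp fun v hv => ⟨hv.2, hv.1⟩⟩

lemma succ_val (hm : 4 ≤ m) (i : Fin m) :
    ((i + 1 : Fin m)).val = i.val + 1 ∧ i.val + 1 < m ∨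
      ((i + 1 : Fin m)).val = 0 ∧ i.val + 1 = m := by
  have h1 : (1 : Fin m).val = 1 := by rw [Fin.val_one']; exact Nat.mod_eq_of_lt (by omega)
  rw [Fin.add_def, h1]
  have hi := i.isLt
  rcases Nat.lt_or_ge (i.val + 1) m with h | h
  · exact Or.inl ⟨Nat.mod_eq_of_lt h, h⟩
  · have he : i.val + 1 = m := by omega
    exact Or.inr ⟨by simp [he], he⟩

lemma eSym_mem (hm : 4 ≤ m) (i : Fin m) : s(i, i + 1) ∈ (cycleGraph m).edgeSet := by
  rw [SimpleGraph.mem_edgeSet, cycleGraph_adj']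
  right
  rw [add_sub_cancel_left, Fin.val_one']
  exact Nat.mod_eq_of_lt (by omega)

/-- The `i`-th edge of the cycle. -/
def eE (hm : 4 ≤ m) (i : Fin m) : (cycleGraph m).edgeSet := ⟨s(i, i + 1), eSym_mem hm i⟩

lemma eE_inj (hm : 4 ≤ m) : Function.Injective (eE hm) := by
  intro i j h
  have h' : s(i, i + 1) = s(j, j + 1) := congrArg Subtype.val h
  rw [Sym2.eq_iff] at h'
  rcases h' with ⟨h1, _⟩ | ⟨h1, h2⟩
  · exact h1
  · exfalso
    have hi := succ_val hm i
    have hj := succ_val hm j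
    have e1 : i.val = ((j + 1 : Fin m)).val := congrArg Fin.val h1
    have e2 : ((i + 1 : Fin m)).val = j.val := congrArg Fin.val h2
    have := i.isLt; have := j.isLt
    omega

lemma eE_surj (hm : 4 ≤ m) : Function.Surjective (eE hm) := by
  have h1 : (1 : Fin m).val = 1 := by rw [Fin.val_one']; exact Nat.mod_eq_of_lt (by omega)
  rintro ⟨e, he⟩
  induction e using Sym2.ind with
  | _ u v =>
    rw [SimpleGraph.mem_edgeSet, cycleGraph_adj'] at he
    rcases he with h | h
    · have huv : u - v = 1 := Fin.ext (by rw [h1]; exact h)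
      have hu : u = v + 1 := by rw [← huv]; exact (add_sub_cancel v u).symm
      exact ⟨v, Subtype.ext (by simp only [eE, hu]; exact Sym2.eq_swap.symm ▸ rfl)⟩
    · have hvu : v - u = 1 := Fin.ext (by rw [h1]; exact h)
      have hv : v = u + 1 := by rw [← hvu]; exact (add_sub_cancel u v).symm
      exact ⟨u, Subtype.ext (by simp [eE, hv])⟩

lemma ne_succ (hm : 4 ≤ m) (i : Fin m) : i ≠ i + 1 := by
  intro h
  have := congrArg Fin.val h
  have h2 := succ_val hm i
  have := i.isLt
  omega

lemma adj_succ (hm : 4 ≤ m) (i : Fin m) :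
    EdgeAdj (cycleGraph m) (eE hm i) (eE hm (i + 1)) := by
  refine ⟨fun h => ne_succ hm i (eE_inj hm h), ⟨i + 1, ?_, ?_⟩⟩
  · show (i + 1 : Fin m) ∈ s(i, i + 1); simp
  · show (i + 1 : Fin m) ∈ s(i + 1, i + 1 + 1); simp

lemma adj_mk (hm : 4 ≤ m) {x y : ℕ} (hx : x < m) (hy : y < m) (hxy : y = x + 1) :
    EdgeAdj (cycleGraph m) (eE hm ⟨x, hx⟩) (eE hm ⟨y, hy⟩) := by
  have hplus : (⟨x, hx⟩ : Fin m) + 1 = ⟨y, hy⟩ := by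
    have := succ_val hm (⟨x, hx⟩ : Fin m)
    apply Fin.ext
    simp only at this ⊢
    omega
  have h := adj_succ hm (⟨x, hx⟩ : Fin m)
  rwa [hplus] at h

lemma edgeAdj_iff (hm : 4 ≤ m) (i j : Fin m) :
    EdgeAdj (cycleGraph m) (eE hm i) (eE hm j) → j = i + 1 ∨ i = j + 1 := by
  rintro ⟨hne, v, hv1, hv2⟩
  have hij : i ≠ j := fun h => hne (congrArg _ h)
  have hv1' : v = i ∨ v = i + 1 := by
    have : v ∈ s(i, i + 1) := hv1
    simpa using this
  have hv2' : v = j ∨ v = j + 1 := by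
    have : v ∈ s(j, j + 1) := hv2
    simpa using this
  rcases hv1' with rfl | rfl <;> rcases hv2' with h | h
  · exact absurd h hij
  · exact Or.inr h
  · exact Or.inl h.symm
  · exact absurd (add_right_cancel h) hij

end Stmt3Aux

set_option maxHeartbeats 1600000 in
open Stmt3Aux in
/-- For `m ≥ 4`, `χ'_dom(C_m) = m/2` if `m ≡ 0 (mod 4)`, and `⌊m/2⌋ + 1` otherwise. -/
theorem stmt_3 (m : ℕ) (hm : 4 ≤ m) :
    domEdgeChrom (SimpleGraph.cycleGraph m) =
      if m % 4 = 0 then m / 2 else m / 2 + 1 := by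
  classical
  haveI : NeZero m := ⟨by omega⟩
  set N := if m % 4 = 0 then m / 2 else m / 2 + 1 with hN
  -- the nat-level coloring value
  obtain ⟨dn, hdn⟩ : ∃ dn : Fin m → ℕ, ∀ i, dn i = 2 * (i.val / 4) + i.val % 2 :=
    ⟨fun i => 2 * (i.val / 4) + i.val % 2, fun _ => rfl⟩
  have hlt : ∀ i : Fin m, dn i < N := by
    intro i
    have := i.isLt
    rw [hN, hdn]; split_ifs with h <;> omega
  -- UPPER BOUND: explicit coloring
  have upper : ∃ c : (cycleGraph m).edgeSet → Fin N, IsDomEdgeColoring (cycleGraph m) c := by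
    obtain ⟨idx, hidx⟩ : ∃ idx : (cycleGraph m).edgeSet → Fin m, ∀ f, eE hm (idx f) = f :=
      ⟨fun f => (eE_surj hm f).choose, fun f => (eE_surj hm f).choose_spec⟩
    have hqa : ∀ a : Fin m, idx (eE hm a) = a := fun a => eE_inj hm (hidx _)
    obtain ⟨c, hcval⟩ : ∃ c : (cycleGraph m).edgeSet → Fin N, ∀ f, (c f).val = dn (idx f) :=
      ⟨fun f => ⟨dn (idx f), hlt _⟩, fun _ => rfl⟩
    have hcE : ∀ a : Fin m, (c (eE hm a)).val = dn a := fun a => by rw [hcval, hqa]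
    refine ⟨c, ?_, ?_⟩
    · -- properness
      intro e f hadj
      obtain ⟨a, rfl⟩ := eE_surj hm e
      obtain ⟨b, rfl⟩ := eE_surj hm f
      intro hcol
      have hcol' : dn a = dn b := by rw [← hcE a, ← hcE b, hcol]
      rw [hdn a, hdn b] at hcol'
      have hab : b = a + 1 ∨ a = b + 1 := edgeAdj_iff hm a b hadj
      have h1 := succ_val hm a
      have h2 := succ_val hm b
      have := a.isLt; have := b.isLt
      rcases hab with h | h <;> have := congrArg Fin.val h <;> omega
    · -- dominance
      intro v
      by_cases hv : ∃ i : Fin m, dn i = v.val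
      · obtain ⟨i, hi⟩ := hv
        set a := 4 * (i.val / 4) + i.val % 2 with ha
        have ham : a < m := by have := i.isLt; omega
        by_cases h2 : a + 2 < m
        · refine ⟨eE hm ⟨a + 1, by omega⟩, ?_⟩
          intro f hf
          obtain ⟨j, rfl⟩ := eE_surj hm f
          have hj : dn j = v.val := by rw [← hcE j, hf]
          have hjv : j.val = a ∨ j.val = a + 2 := by
            have := j.isLt; have := i.isLt
            rw [hdn] at hj hi
            omega
          right
          rcases hjv with h | h
          · have hjeq : j = ⟨a, by omega⟩ := Fin.ext h
            rw [hjeq]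
            exact edgeAdj_symm (adj_mk hm (by omega) (by omega) rfl)
          · have hjeq : j = ⟨a + 2, by omega⟩ := Fin.ext h
            rw [hjeq]
            exact adj_mk hm (by omega) (by omega) rfl
        · refine ⟨eE hm ⟨a, ham⟩, ?_⟩
          intro f hf
          obtain ⟨j, rfl⟩ := eE_surj hm f
          have hj : dn j = v.val := by rw [← hcE j, hf]
          left
          have hjv : j.val = a := by
            have := j.isLt; have := i.isLt
            rw [hdn] at hj hi
            omega
          exact congrArg (eE hm) (Fin.ext hjv)
      · push_neg at hv
        exact ⟨eE hm 0, fun f hf => by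
          obtain ⟨j, rfl⟩ := eE_surj hm f
          exact absurd ((hcE j).symm.trans (congrArg Fin.val hf)) (hv j)⟩
  -- LOWER BOUND
  have lower : ∀ n : ℕ, (∃ c : (cycleGraph m).edgeSet → Fin n,
      IsDomEdgeColoring (cycleGraph m) c) → N ≤ n := by
    rintro n ⟨c, hprop, hdom⟩
    set d : Fin m → Fin n := fun i => c (eE hm i) with hd_def
    have hp : ∀ i : Fin m, d i ≠ d (i + 1) := fun i => hprop _ _ (adj_succ hm i)
    have hd : ∀ v : Fin n, ∃ k : Fin m, ∀ j, d j = v → j = k ∨ j = k + 1 ∨ j + 1 = k := by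
      intro v
      obtain ⟨e, he⟩ := hdom v
      obtain ⟨k, rfl⟩ := eE_surj hm e
      refine ⟨k, fun j hj => ?_⟩
      rcases he (eE hm j) hj with h | h
      · exact Or.inl (eE_inj hm h)
      · rcases edgeAdj_iff hm k j h with h' | h'
        · exact Or.inr (Or.inl h')
        · exact Or.inr (Or.inr h'.symm)
    -- no element of a 2+ class equals the dominating index
    have notk : ∀ (k x y : Fin m), d x = d y → x ≠ y →
        (x = k ∨ x = k + 1 ∨ x + 1 = k) → (y = k ∨ y = k + 1 ∨ y + 1 = k) →
        x = k + 1 ∨ x + 1 = k := by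
      intro k x y hxy hne hx hy
      rcases hx with rfl | hx
      · exfalso
        rcases hy with rfl | hy | hy
        · exact hne rfl
        · exact hp x (hxy.trans (congrArg d hy))
        · exact hp y (hxy.symm.trans (congrArg d hy).symm)
      · exact hx
    -- each color class has at most 2 elements
    have htriple : ∀ i j l : Fin m, d i = d j → d i = d l → i = j ∨ i = l ∨ j = l := by
      intro i j l hij hil
      by_cases h1 : i = j
      · exact Or.inl h1
      by_cases h2 : i = l
      · exact Or.inr (Or.inl h2)
      by_cases h3 : j = l
      · exact Or.inr (Or.inr h3)
      exfalso
      obtain ⟨k, hk⟩ := hd (d i)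
      have Hi := notk k i j hij h1 (hk i rfl) (hk j hij.symm)
      have Hj := notk k j i hij.symm (Ne.symm h1) (hk j hij.symm) (hk i rfl)
      have Hl := notk k l i hil.symm (Ne.symm h2) (hk l hil.symm) (hk i rfl)
      have huniq : ∀ x y : Fin m, x + 1 = k → y + 1 = k → x = y := fun x y hx hy =>
        add_right_cancel (hx.trans hy.symm)
      rcases Hi with hi | hi <;> rcases Hj with hj | hj <;> rcases Hl with hl | hl
      · exact h1 (hi.trans hj.symm)
      · exact h1 (hi.trans hj.symm)
      · exact h2 (hi.trans hl.symm)
      · exact h3 (huniq j l hj hl)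
      · exact h3 (hj.trans hl.symm)
      · exact h2 (huniq i l hi hl)
      · exact h1 (huniq i j hi hj)
      · exact h1 (huniq i j hi hj)
    -- a color class with two distinct elements: they differ by 2
    have hpair : ∀ i j : Fin m, d i = d j → i ≠ j → j = i + 1 + 1 ∨ i = j + 1 + 1 := by
      intro i j hij hne
      obtain ⟨k, hk⟩ := hd (d i)
      have Hi := notk k i j hij hne (hk i rfl) (hk j hij.symm)
      have Hj := notk k j i hij.symm (Ne.symm hne) (hk j hij.symm) (hk i rfl)
      rcases Hi with hi | hi <;> rcases Hj with hj | hj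
      · exact absurd (hi.trans hj.symm) hne
      · exact Or.inr (by rw [hi, ← hj])
      · exact Or.inl (by rw [hj, ← hi])
      · exact absurd (add_right_cancel (hi.trans hj.symm)) hne
    -- counting: m ≤ 2n
    have hcard : m ≤ 2 * n := by
      have hfib : ∀ a ∈ Finset.univ.image d,
          (Finset.univ.filter fun x => d x = a).card ≤ 2 := by
        intro a _
        by_contra hgt
        push_neg at hgt
        obtain ⟨x, y, z, hx, hy, hz, hxy, hxz, hyz⟩ := Finset.two_lt_card_iff.mp hgt
        simp only [Finset.mem_filter] at hx hy hz
        rcases htriple x y z (hx.2.trans hy.2.symm) (hx.2.trans hz.2.symm) with h | h | h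
        exacts [hxy h, hxz h, hyz h]
      have h1 := Finset.card_le_mul_card_image (f := d) Finset.univ 2 hfib
      have h2 : (Finset.univ.image d).card ≤ n := by
        simpa using (Finset.card_le_univ (Finset.univ.image d))
      simp only [Finset.card_univ, Fintype.card_fin] at h1
      omega
    rw [hN]
    split_ifs with h0
    · omega
    by_cases hodd : m % 2 = 1
    · omega
    -- m % 4 = 2 case
    have hm4 : m % 4 = 2 := by omega
    by_contra hlt'
    push_neg at hlt'
    have h2n : 2 * n = m := by omega
    -- every fiber has exactly 2 elements
    have hsum : (Finset.univ : Finset (Fin m)).card =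
        ∑ v : Fin n, (Finset.univ.filter fun x => d x = v).card :=
      Finset.card_eq_sum_card_fiberwise (fun x _ => Finset.mem_univ (d x))
    have hle2 : ∀ v : Fin n, (Finset.univ.filter fun x => d x = v).card ≤ 2 := by
      intro v
      by_contra hgt
      push_neg at hgt
      obtain ⟨x, y, z, hx, hy, hz, hxy, hxz, hyz⟩ := Finset.two_lt_card_iff.mp hgt
      simp only [Finset.mem_filter] at hx hy hz
      rcases htriple x y z (hx.2.trans hy.2.symm) (hx.2.trans hz.2.symm) with h | h | h
      exacts [hxy h, hxz h, hyz h]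
    have hfib2 : ∀ v : Fin n, (Finset.univ.filter fun x => d x = v).card = 2 := by
      by_contra hne
      push_neg at hne
      obtain ⟨v, hv⟩ := hne
      have hstrict : ∑ w : Fin n, (Finset.univ.filter fun x => d x = w).card <
          ∑ _w : Fin n, 2 := by
        apply Finset.sum_lt_sum (fun i _ => hle2 i)
        exact ⟨v, Finset.mem_univ v, by have := hle2 v; omega⟩
      simp only [Finset.sum_const, Finset.card_univ, Fintype.card_fin, smul_eq_mul] at hstrict
      rw [← hsum] at hstrict
      simp only [Finset.card_univ, Fintype.card_fin] at hstrict
      omega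
    -- parity: elements of the same fiber have the same parity of index
    have hpar : ∀ i j : Fin m, d i = d j → i.val % 2 = j.val % 2 := by
      intro i j hij
      by_cases hne : i = j
      · rw [hne]
      rcases hpair i j hij hne with h | h <;>
      · have h1 := succ_val hm (by exact i)
        have h2 := succ_val hm (by exact j)
        have h3 := succ_val hm (i + 1)
        have h4 := succ_val hm (j + 1)
        have := congrArg Fin.val h
        have := i.isLt; have := j.isLt
        omega
    -- the set of even-indexed edges
    set T := Finset.univ.filter (fun i : Fin m => i.val % 2 = 0) with hT
    have hTsum : T.card = ∑ v : Fin n, (T.filter fun x => d x = v).card :=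
      Finset.card_eq_sum_card_fiberwise (fun x _ => Finset.mem_univ (d x))
    have hTeven : 2 ∣ T.card := by
      rw [hTsum]
      apply Finset.dvd_sum
      intro v _
      obtain ⟨x, y, hxy, hset⟩ := Finset.card_eq_two.mp (hfib2 v)
      have hx : d x = v := by
        have : x ∈ Finset.univ.filter fun a => d a = v := by rw [hset]; simp
        exact (Finset.mem_filter.mp this).2
      have hy : d y = v := by
        have : y ∈ Finset.univ.filter fun a => d a = v := by rw [hset]; simp
        exact (Finset.mem_filter.mp this).2
      have hTfilter : T.filter (fun x => d x = v) =
          (Finset.univ.filter fun a => d a = v).filter (fun i => i.val % 2 = 0) := by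
        rw [hT, Finset.filter_comm]
      rw [hTfilter, hset]
      have hparxy : x.val % 2 = y.val % 2 := hpar x y (hx.trans hy.symm)
      by_cases hex : x.val % 2 = 0
      · have : ({x, y} : Finset (Fin m)).filter (fun i => i.val % 2 = 0) = {x, y} := by
          apply Finset.filter_eq_self.mpr
          intro a ha
          rcases Finset.mem_insert.mp ha with rfl | ha
          · exact hex
          · rw [Finset.mem_singleton.mp ha]; omega
        rw [this, Finset.card_pair hxy]
      · have : ({x, y} : Finset (Fin m)).filter (fun i => i.val % 2 = 0) = ∅ := by
          apply Finset.filter_eq_empty_iff.mpr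
          intro a ha
          rcases Finset.mem_insert.mp ha with rfl | ha
          · exact hex
          · rw [Finset.mem_singleton.mp ha]; omega
        rw [this]
        simp
    -- but T has m/2 elements, which is odd
    have hTcard : T.card = ((Finset.range m).filter (fun i => i % 2 = 0)).card := by
      apply Finset.card_bij (fun (i : Fin m) _ => i.val)
      · intro a ha
        simp only [Finset.mem_filter, Finset.mem_range]
        exact ⟨a.isLt, (Finset.mem_filter.mp ha).2⟩
      · intro a _ b _ h
        exact Fin.ext h
      · intro b hb
        simp only [Finset.mem_filter, Finset.mem_range] at hb
        exact ⟨⟨b, hb.1⟩, by simp [hT, hb.2], rfl⟩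
    have hcount : ∀ M : ℕ, ((Finset.range M).filter (fun i => i % 2 = 0)).card = (M + 1) / 2 := by
      intro M
      induction M with
      | zero => simp
      | succ k ih =>
        rw [Finset.range_add_one, Finset.filter_insert]
        split_ifs with h
        · rw [Finset.card_insert_of_notMem (by simp)]
          omega
        · omega
    rw [hTcard, hcount m] at hTeven
    omega
  -- conclude
  have hmem : N ∈ {k | ∃ c : (cycleGraph m).edgeSet → Fin k, IsDomEdgeColoring (cycleGraph m) c} :=
    upper
  rw [domEdgeChrom]
  exact le_antisymm (Nat.sInf_le hmem) (le_csInf ⟨N, hmem⟩ fun n hn => lower n hn)
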